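/- For n = 5 or n ≥ 7, and any integer k with 2 ≤ k ≤ n−2 and gcd(k,n) = 1, the commutator subgroup B_n' of the braid group B_n is generated by the two elements α^k σ_1^{−k(n−1)} and σ_1 σ_{1+k}^{−1}, where α = σ_1⋯σ_{n−1}. -/

import Mathlib

/-- Artin braid relators for the braid group on `n` strands, with generators
`FreeGroup.of i` corresponding to `σ_{i+1}` for `i : Fin (n-1)`. -/
def braidRels (n : ℕ) : Set (FreeGroup (Fin (n - 1))) :=
  {r | ∃ i j : Fin (n - 1),
      ((j : ℕ) ≥ (i : ℕ) + 2 ∧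
        r = FreeGroup.of i * FreeGroup.of j * (FreeGroup.of i)⁻¹ * (FreeGroup.of j)⁻¹) ∨
      ((j : ℕ) = (i : ℕ) + 1 ∧
        r = FreeGroup.of i * FreeGroup.of j * FreeGroup.of i *
          (FreeGroup.of j * FreeGroup.of i * FreeGroup.of j)⁻¹)}

/-- The braid group on `n` strands. -/
def BraidGroup (n : ℕ) : Type := PresentedGroup (braidRels n)

instance (n : ℕ) : Group (BraidGroup n) :=
  inferInstanceAs (Group (PresentedGroup (braidRels n)))

/-- The Artin generator `σ_i` of `BraidGroup n`, for `1 ≤ i ≤ n-1` (junk value `1` otherwise). -/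
def σ {n : ℕ} (i : ℕ) : BraidGroup n :=
  if h : 1 ≤ i ∧ i < n then PresentedGroup.of (⟨i - 1, by omega⟩ : Fin (n - 1)) else 1

/-- The element `α = σ_1 σ_2 ⋯ σ_{n-1}`. -/
def α (n : ℕ) : BraidGroup n := ((List.range (n - 1)).map (fun i => σ (i + 1))).prod

/-- The half-twist `σ_j` for an index `j` taken modulo `n`, defined by conjugating
`σ_1` by the rotation `α`: `σ_{1+m} = α^m σ_1 α^{-m}`. -/
def σm {n : ℕ} (j : ℤ) : BraidGroup n := (α n) ^ (j - 1) * σ 1 * (α n) ^ (1 - j)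

namespace BraidWork

variable {n : ℕ}

lemma mk_of (i : Fin (n-1)) :
    PresentedGroup.mk (braidRels n) (FreeGroup.of i) = PresentedGroup.of i := rfl

lemma rel_one {r : FreeGroup (Fin (n-1))} (h : r ∈ braidRels n) :
    PresentedGroup.mk (braidRels n) r = 1 :=
  (QuotientGroup.eq_one_iff r).mpr (Subgroup.subset_normalClosure h)

lemma σ_def {i : ℕ} (h1 : 1 ≤ i) (h2 : i < n) :
    (σ i : BraidGroup n) = PresentedGroup.of (⟨i - 1, by omega⟩ : Fin (n - 1)) := by
  rw [σ]; exact dif_pos (⟨h1, h2⟩ : 1 ≤ i ∧ i < n)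

lemma braid_comm {i j : ℕ} (h1 : 1 ≤ i) (h2 : i + 2 ≤ j) (h3 : j ≤ n - 1) :
    (σ i : BraidGroup n) * σ j = σ j * σ i := by
  have hi : i < n := by omega
  have hj : j < n := by omega
  have hrel : (FreeGroup.of (⟨i-1, by omega⟩ : Fin (n-1)) * FreeGroup.of (⟨j-1, by omega⟩ : Fin (n-1)) *
      (FreeGroup.of (⟨i-1, by omega⟩ : Fin (n-1)))⁻¹ * (FreeGroup.of (⟨j-1, by omega⟩ : Fin (n-1)))⁻¹)
      ∈ braidRels n := ⟨⟨i-1, by omega⟩, ⟨j-1, by omega⟩, Or.inl ⟨by simp; omega, rfl⟩⟩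
  have h := rel_one hrel
  rw [map_mul, map_mul, map_mul, map_inv, map_inv, mk_of, mk_of] at h
  rw [σ_def h1 hi, σ_def (by omega : 1 ≤ j) hj]
  exact commutatorElement_eq_one_iff_mul_comm.mp h

lemma braid_rel {i : ℕ} (h1 : 1 ≤ i) (h2 : i + 1 ≤ n - 1) :
    (σ i : BraidGroup n) * σ (i+1) * σ i = σ (i+1) * σ i * σ (i+1) := by
  have hi : i < n := by omega
  have hj : i + 1 < n := by omega
  have hrel : (FreeGroup.of (⟨i-1, by omega⟩ : Fin (n-1)) * FreeGroup.of (⟨i, by omega⟩ : Fin (n-1)) *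
      FreeGroup.of (⟨i-1, by omega⟩ : Fin (n-1)) *
      (FreeGroup.of (⟨i, by omega⟩ : Fin (n-1)) * FreeGroup.of (⟨i-1, by omega⟩ : Fin (n-1)) *
        FreeGroup.of (⟨i, by omega⟩ : Fin (n-1)))⁻¹)
      ∈ braidRels n := ⟨⟨i-1, by omega⟩, ⟨i, by omega⟩, Or.inr ⟨by simp; omega, rfl⟩⟩
  have h := rel_one hrel
  rw [map_mul, map_mul, map_inv, map_mul, map_mul, mk_of, mk_of] at h
  rw [σ_def h1 hi, σ_def (by omega : 1 ≤ i + 1) hj]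
  have : (⟨i + 1 - 1, by omega⟩ : Fin (n-1)) = ⟨i, by omega⟩ := by simp
  rw [this]
  exact mul_inv_eq_one.mp h

/-- product σ_a σ_{a+1} ⋯ σ_{a+l-1} -/
def P (n : ℕ) (a l : ℕ) : BraidGroup n := ((List.range' a l).map σ).prod

lemma P_zero (a : ℕ) : P n a 0 = 1 := rfl

lemma P_succ_left (a l : ℕ) : P n a (l+1) = σ a * P n (a+1) l := by
  rw [P, List.range'_succ, List.map_cons, List.prod_cons, P]

lemma P_concat (a l : ℕ) : P n a (l+1) = P n a l * σ (a+l) := by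
  rw [P, List.range'_concat, List.map_append, List.prod_append, P]
  simp

lemma P_one (a : ℕ) : P n a 1 = σ a := by
  rw [P_succ_left, P_zero, mul_one]

lemma alpha_eq : α n = P n 1 (n-1) := by
  rw [α, P, List.range'_eq_map_range, List.map_map]
  congr 1
  exact List.map_congr_left (fun i _ => by simp [Nat.add_comm])

lemma comm_P {i a l : ℕ} (hcomm : ∀ j, a ≤ j → j < a+l → (σ i : BraidGroup n) * σ j = σ j * σ i) :
    σ i * P n a l = P n a l * σ i := by
  induction l generalizing a with
  | zero => rw [P_zero, mul_one, one_mul]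
  | succ l ih =>
    rw [P_succ_left, ← mul_assoc, hcomm a le_rfl (by omega), mul_assoc,
      ih (fun j hj1 hj2 => hcomm j (by omega) (by omega)), mul_assoc]

lemma P_append (a l1 l2 : ℕ) : P n a (l2 + l1) = P n a l1 * P n (a + l1) l2 := by
  rw [P, P, P, Nat.add_comm l2 l1, ← List.range'_append, List.map_append, List.prod_append]
  norm_num

/-- commuting a σ through a block, with trailing context -/
lemma comm_P_ctx {i a l : ℕ}
    (hcomm : ∀ j, a ≤ j → j < a+l → (σ i : BraidGroup n) * σ j = σ j * σ i)
    (x : BraidGroup n) : P n a l * (σ i * x) = σ i * (P n a l * x) := by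
  rw [← mul_assoc, ← comm_P hcomm, mul_assoc]

lemma braid_rel_ctx {i : ℕ} (h1 : 1 ≤ i) (h2 : i + 1 ≤ n - 1) (x : BraidGroup n) :
    σ i * (σ (i+1) * (σ i * x)) = σ (i+1) * (σ i * (σ (i+1) * x)) := by
  simp only [← mul_assoc]
  rw [braid_rel h1 h2]

lemma alpha_shift {i : ℕ} (h1 : 1 ≤ i) (h2 : i + 1 ≤ n - 1) :
    α n * σ i = σ (i+1) * α n := by
  obtain ⟨L, hL⟩ : ∃ L, n - 1 - (i+1) = L := ⟨_, rfl⟩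
  have hL2 : n - 1 = L + 2 + (i-1) := by omega
  have hsplit : α n = P n 1 (i-1) * (σ i * (σ (i+1) * P n (i+2) L)) := by
    rw [alpha_eq, hL2, P_append 1 (i-1) (L+2)]
    congr 1
    have e1 : 1 + (i - 1) = i := by omega
    have e2 : L + 2 = L + 1 + 1 := by omega
    rw [e1, e2, P_succ_left, P_succ_left]
  have hcomm2 : ∀ j, i+2 ≤ j → j < (i+2)+L → (σ i : BraidGroup n) * σ j = σ j * σ i :=
    fun j hj1 hj2 => braid_comm h1 hj1 (by omega)
  have hcomm1 : ∀ j, 1 ≤ j → j < 1+(i-1) → (σ (i+1) : BraidGroup n) * σ j = σ j * σ (i+1) :=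
    fun j hj1 hj2 => (braid_comm hj1 (by omega) h2).symm
  calc α n * σ i
      = P n 1 (i-1) * (σ i * (σ (i+1) * (P n (i+2) L * σ i))) := by
        rw [hsplit]; simp only [mul_assoc]
    _ = P n 1 (i-1) * (σ i * (σ (i+1) * (σ i * P n (i+2) L))) := by
        rw [← comm_P hcomm2]
    _ = P n 1 (i-1) * (σ (i+1) * (σ i * (σ (i+1) * P n (i+2) L))) := by
        rw [braid_rel_ctx h1 h2]
    _ = σ (i+1) * (P n 1 (i-1) * (σ i * (σ (i+1) * P n (i+2) L))) := by
        rw [comm_P_ctx hcomm1]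
    _ = σ (i+1) * α n := by rw [hsplit]

lemma σm_def (j : ℤ) : (σm j : BraidGroup n) = (α n) ^ (j - 1) * σ 1 * (α n) ^ (1 - j) := rfl

lemma σm_one : (σm 1 : BraidGroup n) = σ 1 := by
  rw [σm_def]; norm_num

lemma σm_succ (j : ℤ) : (σm (j+1) : BraidGroup n) = α n * σm j * (α n)⁻¹ := by
  rw [σm_def, σm_def]
  have h1 : (α n : BraidGroup n) ^ (j + 1 - 1) = α n * (α n) ^ (j - 1) := by
    rw [← zpow_one_add (α n) (j-1)]; ring_nf
  have h2 : (α n : BraidGroup n) ^ (1 - (j+1)) = (α n) ^ (1 - j) * (α n)⁻¹ := by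
    rw [← zpow_sub_one (α n) (1-j)]; ring_nf
  rw [h1, h2]
  simp only [mul_assoc]

lemma σm_nat {i : ℕ} (h1 : 1 ≤ i) (h2 : i ≤ n - 1) : (σm i : BraidGroup n) = σ i := by
  induction i with
  | zero => omega
  | succ i ih =>
    rcases Nat.eq_or_lt_of_le h1 with h | h
    · rw [← h]; exact_mod_cast σm_one
    · have e1 : ((i+1 : ℕ) : ℤ) = (i : ℤ) + 1 := by push_cast; ring
      rw [e1, σm_succ, ih (by omega) (by omega), alpha_shift (by omega) (by omega),
        mul_assoc, mul_inv_cancel, mul_one]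

lemma alpha_sq_comm (hn : 3 ≤ n) : (α n : BraidGroup n) ^ 2 * σ (n-1) = σ 1 * (α n) ^ 2 := by
  have halpha1 : α n = σ 1 * P n 2 (n-2) := by
    rw [alpha_eq, show n - 1 = (n-2) + 1 from by omega, P_succ_left]
  have hshiftP : α n * P n 1 (n-2) = P n 2 (n-2) * α n := by
    suffices h : ∀ L, L ≤ n - 2 → α n * P n 1 L = P n 2 L * α n from h (n-2) le_rfl
    intro L
    induction L with
    | zero => intro _; rw [P_zero, P_zero, mul_one, one_mul]
    | succ L ih =>
      intro hLn
      rw [P_concat, P_concat, ← mul_assoc, ih (by omega), mul_assoc, mul_assoc,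
        alpha_shift (by omega) (by omega)]
      have e : (σ (1+L+1) : BraidGroup n) = σ (2+L) := by congr 1; omega
      rw [e]
  have hsq : (α n : BraidGroup n) ^ 2 = σ 1 * (α n * P n 1 (n-2)) := by
    rw [pow_two, hshiftP]
    calc α n * α n = (σ 1 * P n 2 (n-2)) * α n := by rw [← halpha1]
      _ = σ 1 * (P n 2 (n-2) * α n) := by rw [mul_assoc]
  have hfin : P n 1 (n-2) * σ (n-1) = α n := by
    have e : (σ (n-1) : BraidGroup n) = σ (1 + (n-2)) := by congr 1; omega
    rw [e, ← P_concat, alpha_eq]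
    congr 1
    omega
  calc (α n : BraidGroup n) ^ 2 * σ (n-1) = σ 1 * (α n * (P n 1 (n-2) * σ (n-1))) := by
        rw [hsq]; simp [mul_assoc]
    _ = σ 1 * (α n * α n) := by rw [hfin]
    _ = σ 1 * (α n) ^ 2 := by rw [pow_two]

lemma alpha_n_comm (hn : 3 ≤ n) : (α n : BraidGroup n) ^ (n : ℤ) * σ 1 = σ 1 * (α n) ^ (n : ℤ) := by
  have h1 : (σ (n-1) : BraidGroup n) = (α n) ^ ((n : ℤ) - 2) * σ 1 * (α n) ^ (2 - (n : ℤ)) := by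
    rw [← σm_nat (by omega : 1 ≤ n - 1) (le_refl (n-1)), σm_def]
    have e1 : ((n - 1 : ℕ) : ℤ) - 1 = (n : ℤ) - 2 := by
      have : (1 : ℤ) ≤ (n : ℤ) := by exact_mod_cast Nat.one_le_of_lt hn
      push_cast [Nat.cast_sub (by omega : 1 ≤ n)]; ring
    have e2 : 1 - ((n - 1 : ℕ) : ℤ) = 2 - (n : ℤ) := by
      push_cast [Nat.cast_sub (by omega : 1 ≤ n)]; ring
    rw [e1, e2]
  have h2 : (α n : BraidGroup n) ^ (2:ℤ) * ((α n) ^ ((n:ℤ) - 2) * σ 1 * (α n) ^ (2 - (n:ℤ)))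
      = σ 1 * (α n) ^ (2:ℤ) := by
    have h2' := alpha_sq_comm hn
    rw [h1] at h2'
    exact_mod_cast h2'
  calc (α n : BraidGroup n) ^ (n : ℤ) * σ 1
      = ((α n) ^ (2 : ℤ) * ((α n) ^ ((n:ℤ) - 2) * σ 1 * (α n) ^ (2 - (n:ℤ)))) * (α n) ^ ((n:ℤ) - 2) := by
        group
    _ = (σ 1 * (α n) ^ (2 : ℤ)) * (α n) ^ ((n:ℤ) - 2) := by rw [h2]
    _ = σ 1 * (α n) ^ (n : ℤ) := by group

lemma σm_period (hn : 3 ≤ n) (j c : ℤ) : (σm (j + c * n) : BraidGroup n) = σm j := by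
  have hc : Commute ((α n : BraidGroup n) ^ (n : ℤ)) (σ 1) := alpha_n_comm hn
  have hc2 : Commute ((α n : BraidGroup n) ^ (c * (n:ℤ))) (σ 1) := by
    rw [mul_comm c, zpow_mul]
    exact hc.zpow_left c
  have key : (α n : BraidGroup n) ^ (c * (n:ℤ)) * σ 1 * ((α n) ^ (c * (n:ℤ)))⁻¹ = σ 1 := by
    rw [hc2.eq, mul_assoc, mul_inv_cancel, mul_one]
  calc (σm (j + c * n) : BraidGroup n)
      = (α n) ^ (j - 1) * ((α n) ^ (c * (n:ℤ)) * σ 1 * ((α n) ^ (c * (n:ℤ)))⁻¹) * (α n) ^ (1 - j) := by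
        rw [σm_def]; group
    _ = σm j := by rw [key, σm_def]

/-- exponent sum homomorphism -/
def expSum (n : ℕ) : BraidGroup n →* Multiplicative ℤ :=
  PresentedGroup.toGroup (f := fun (_ : Fin (n-1)) => Multiplicative.ofAdd (1:ℤ)) (by
    rintro r ⟨i, j, ⟨h, rfl⟩ | ⟨h, rfl⟩⟩ <;>
      simp only [map_mul, map_inv, FreeGroup.lift_apply_of] <;> group)

lemma expSum_σ {i : ℕ} (h1 : 1 ≤ i) (h2 : i < n) :
    expSum n (σ i) = Multiplicative.ofAdd (1:ℤ) := by
  rw [σ_def h1 h2, expSum]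
  exact PresentedGroup.toGroup.of _

/-- Reidemeister–Schreier style kernel lemma -/
lemma ker_le_of_conj {G : Type*} [Group G] (e : G →* Multiplicative ℤ) (t : G)
    (het : e t = Multiplicative.ofAdd 1) (H : Subgroup G)
    (hc1 : ∀ h ∈ H, t * h * t⁻¹ ∈ H) (hc2 : ∀ h ∈ H, t⁻¹ * h * t ∈ H)
    (X : Set G) (hX : Subgroup.closure X = ⊤)
    (hgen : ∀ g ∈ X, g * (t ^ (Multiplicative.toAdd (e g)))⁻¹ ∈ H) :
    e.ker ≤ H := by
  have hp : ∀ s : ℤ, ∀ h ∈ H, t ^ s * h * (t ^ s)⁻¹ ∈ H := by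
    intro s
    induction s using Int.induction_on with
    | zero => intro h hh; simpa using hh
    | succ s ih =>
      intro h hh
      have h' := hc1 _ (ih h hh)
      have e1 : t * (t ^ (s:ℤ) * h * (t ^ (s:ℤ))⁻¹) * t⁻¹ = t ^ ((s:ℤ)+1) * h * (t ^ ((s:ℤ)+1))⁻¹ := by
        group
      rwa [e1] at h'
    | pred s ih =>
      intro h hh
      have h' := hc2 _ (ih h hh)
      have e1 : t⁻¹ * (t ^ (-(s:ℤ)) * h * (t ^ (-(s:ℤ)))⁻¹) * t = t ^ (-(s:ℤ)-1) * h * (t ^ (-(s:ℤ)-1))⁻¹ := by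
        group
      rwa [e1] at h'
  have key : ∀ x : G, x * (t ^ (Multiplicative.toAdd (e x)))⁻¹ ∈ H := by
    intro x
    have hx : x ∈ Subgroup.closure X := by rw [hX]; trivial
    induction hx using Subgroup.closure_induction with
    | mem g hg => exact hgen g hg
    | one => simpa using H.one_mem
    | mul x y hxc hyc hx hy =>
      have h3 := hp (Multiplicative.toAdd (e x)) _ hy
      have h4 := H.mul_mem hx h3
      have e1 : (x * (t ^ (Multiplicative.toAdd (e x)))⁻¹) *
          (t ^ (Multiplicative.toAdd (e x)) * (y * (t ^ (Multiplicative.toAdd (e y)))⁻¹) *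
            (t ^ (Multiplicative.toAdd (e x)))⁻¹)
          = (x * y) * (t ^ (Multiplicative.toAdd (e x) + Multiplicative.toAdd (e y)))⁻¹ := by
        group
      rw [e1] at h4
      rwa [map_mul, toAdd_mul]
    | inv x hxc hx =>
      have h3 := hp (-(Multiplicative.toAdd (e x))) _ (H.inv_mem hx)
      have e1 : t ^ (-(Multiplicative.toAdd (e x))) * (x * (t ^ (Multiplicative.toAdd (e x)))⁻¹)⁻¹ *
          (t ^ (-(Multiplicative.toAdd (e x))))⁻¹
          = x⁻¹ * (t ^ (-(Multiplicative.toAdd (e x))))⁻¹ := by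
        group
      rw [e1] at h3
      rwa [map_inv, toAdd_inv]
  intro x hx
  have hx1 : e x = 1 := hx
  have := key x
  rw [hx1] at this
  simpa using this

lemma conj_zpow_mem {G : Type*} [Group G] (H : Subgroup G) (t : G)
    (hc1 : ∀ h ∈ H, t * h * t⁻¹ ∈ H) (hc2 : ∀ h ∈ H, t⁻¹ * h * t ∈ H) :
    ∀ s : ℤ, ∀ h ∈ H, t ^ s * h * (t ^ s)⁻¹ ∈ H := by
  intro s
  induction s using Int.induction_on with
  | zero => intro h hh; simpa using hh
  | succ s ih =>
    intro h hh
    have h' := hc1 _ (ih h hh)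
    have e1 : t * (t ^ (s:ℤ) * h * (t ^ (s:ℤ))⁻¹) * t⁻¹ = t ^ ((s:ℤ)+1) * h * (t ^ ((s:ℤ)+1))⁻¹ := by
      group
    rwa [e1] at h'
  | pred s ih =>
    intro h hh
    have h' := hc2 _ (ih h hh)
    have e1 : t⁻¹ * (t ^ (-(s:ℤ)) * h * (t ^ (-(s:ℤ)))⁻¹) * t
        = t ^ (-(s:ℤ)-1) * h * (t ^ (-(s:ℤ)-1))⁻¹ := by
      group
    rwa [e1] at h'

lemma ab_σ {i : ℕ} (h1 : 1 ≤ i) (h2 : i ≤ n - 1) :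
    Abelianization.of (σ i : BraidGroup n) = Abelianization.of (σ 1 : BraidGroup n) := by
  induction i with
  | zero => omega
  | succ i ih =>
    rcases Nat.eq_or_lt_of_le h1 with h | h
    · rw [← h]
    · have hbr := congrArg (Abelianization.of (G := BraidGroup n)) (braid_rel (by omega : 1 ≤ i) (by omega))
      simp only [map_mul] at hbr
      set a := Abelianization.of (σ i : BraidGroup n)
      set b := Abelianization.of (σ (i+1) : BraidGroup n)
      have hba : b = a := by
        have h3 : b * (a * b) = a * (a * b) := by
          calc b * (a * b) = b * a * b := (mul_assoc _ _ _).symm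
            _ = a * b * a := hbr.symm
            _ = a * (b * a) := mul_assoc _ _ _
            _ = a * (a * b) := by rw [mul_comm b a]
        exact mul_right_cancel h3
      rw [hba, ih (by omega) (by omega)]

lemma ab_α (hn : 2 ≤ n) :
    Abelianization.of (α n) = (Abelianization.of (σ 1 : BraidGroup n)) ^ (n - 1) := by
  rw [α, map_list_prod, List.map_map]
  rw [List.prod_eq_pow_card _ (Abelianization.of (σ 1 : BraidGroup n)) ?_]
  · simp
  · intro x hx
    simp only [List.mem_map, List.mem_range, Function.comp] at hx
    obtain ⟨i, hi, rfl⟩ := hx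
    exact ab_σ (by omega) (by omega)

end BraidWork

open BraidWork commutatorElement in
theorem commutator_two_generators (n : ℕ) (hn : n = 5 ∨ 7 ≤ n) (k : ℕ)
    (hk1 : 2 ≤ k) (hk2 : k ≤ n - 2) (hg : Nat.gcd k n = 1) :
    Subgroup.closure ({(α n) ^ k * ((σ 1 : BraidGroup n) ^ (k * (n - 1)))⁻¹,
        σ 1 * (σ (1 + k))⁻¹} : Set (BraidGroup n)) = commutator (BraidGroup n) := by
  have hn5 : 5 ≤ n := by rcases hn with h | h <;> omega
  have hn3 : 3 ≤ n := by omega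
  haveI : NeZero n := ⟨by omega⟩
  set t : BraidGroup n := σ 1 with ht
  set q : BraidGroup n := (α n) ^ k with hq
  set m : ℕ := k * (n - 1) with hm
  set u : BraidGroup n := q * (t ^ m)⁻¹ with hu
  set v : BraidGroup n := t * (σ (1 + k))⁻¹ with hv
  set H : Subgroup (BraidGroup n) := Subgroup.closure {u, v} with hH
  have huH : u ∈ H := Subgroup.subset_closure (by simp)
  have hvH : v ∈ H := Subgroup.subset_closure (by simp)
  -- conjugation of σm by q
  have hconj : ∀ j : ℤ, q * σm j * q⁻¹ = σm (j + k) := by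
    intro j
    rw [σm_def, σm_def, hq, ← zpow_natCast (α n) k]
    group
  -- q t q⁻¹ = σ (1+k)
  have hs1 : q * t * q⁻¹ = σ (1 + k) := by
    have h1 := hconj 1
    rw [σm_one, ← ht] at h1
    rw [h1]
    have e1 : (1 : ℤ) + (k : ℤ) = ((1 + k : ℕ) : ℤ) := by push_cast; ring
    rw [e1, σm_nat (by omega) (by omega)]
  have hC : Commute t (σ (1 + k)) := braid_comm (le_refl 1) (by omega) (by omega)
  have hqt : q * t = σ (1 + k) * q := by
    rw [← hs1]; group
  -- conjugation identities
  have htut : t * u * t⁻¹ = v * u := by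
    rw [hu, hv, ← hs1]; group
  have htvt : t * v * t⁻¹ = v := by
    rw [hv]
    calc t * (t * (σ (1+k))⁻¹) * t⁻¹ = t * ((σ (1+k))⁻¹ * t) * t⁻¹ := by rw [hC.inv_right.eq]
      _ = t * (σ (1+k))⁻¹ := by group
  have ht'vt : t⁻¹ * v * t = v := by
    rw [hv]
    calc t⁻¹ * (t * (σ (1+k))⁻¹) * t = (σ (1+k))⁻¹ * t := by group
      _ = t * (σ (1+k))⁻¹ := (hC.inv_right.eq).symm
  have ht'ut : t⁻¹ * u * t = v⁻¹ * u := by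
    have step : t⁻¹ * u * t = σ (1+k) * t⁻¹ * (q * (t^m)⁻¹) := by
      rw [hu]
      calc t⁻¹ * (q * (t^m)⁻¹) * t = t⁻¹ * ((q * t) * (t^m)⁻¹) := by group
        _ = t⁻¹ * ((σ (1+k) * q) * (t^m)⁻¹) := by rw [hqt]
        _ = (t⁻¹ * σ (1+k)) * (q * (t^m)⁻¹) := by group
        _ = (σ (1+k) * t⁻¹) * (q * (t^m)⁻¹) := by rw [hC.inv_left.eq]
        _ = σ (1+k) * t⁻¹ * (q * (t^m)⁻¹) := by group
    rw [step, hu, hv]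
    group
  -- t-stability of H
  have stab_gen : ∀ w : BraidGroup n, w * u * w⁻¹ ∈ H → w * v * w⁻¹ ∈ H →
      ∀ h ∈ H, w * h * w⁻¹ ∈ H := by
    intro w h1 h2 h hh
    have hle : H ≤ Subgroup.comap (MulAut.conj w).toMonoidHom H := by
      rw [hH]
      refine (Subgroup.closure_le _).mpr ?_
      rintro x hx
      simp only [Set.mem_insert_iff, Set.mem_singleton_iff] at hx
      rcases hx with rfl | rfl
      · simpa [Subgroup.mem_comap, MulAut.conj_apply] using h1
      · simpa [Subgroup.mem_comap, MulAut.conj_apply] using h2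
    simpa [Subgroup.mem_comap, MulAut.conj_apply] using hle hh
  have hstab1 : ∀ h ∈ H, t * h * t⁻¹ ∈ H :=
    stab_gen t (by rw [htut]; exact mul_mem hvH huH) (by rw [htvt]; exact hvH)
  have hstab2 : ∀ h ∈ H, t⁻¹ * h * t ∈ H := by
    have := stab_gen t⁻¹ ?_ ?_
    · simpa using this
    · have e : t⁻¹ * u * (t⁻¹)⁻¹ = t⁻¹ * u * t := by rw [inv_inv]
      rw [e, ht'ut]; exact mul_mem (inv_mem hvH) huH
    · have e : t⁻¹ * v * (t⁻¹)⁻¹ = t⁻¹ * v * t := by rw [inv_inv]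
      rw [e, ht'vt]; exact hvH
  have hstabz : ∀ s : ℤ, ∀ h ∈ H, t ^ s * h * (t ^ s)⁻¹ ∈ H := conj_zpow_mem H t hstab1 hstab2
  -- q-stability of H
  have hqstab : ∀ h ∈ H, q * h * q⁻¹ ∈ H := by
    intro h hh
    have h1 : t ^ ((m:ℤ)) * h * (t ^ ((m:ℤ)))⁻¹ ∈ H := hstabz m h hh
    rw [zpow_natCast] at h1
    have h2 : u * (t^m * h * (t^m)⁻¹) * u⁻¹ ∈ H := mul_mem (mul_mem huH h1) (inv_mem huH)
    have e1 : u * (t^m * h * (t^m)⁻¹) * u⁻¹ = q * h * q⁻¹ := by rw [hu]; group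
    rwa [e1] at h2
  have hqstab' : ∀ h ∈ H, q⁻¹ * h * q ∈ H := by
    intro h hh
    have h1 : u⁻¹ * h * u ∈ H := mul_mem (mul_mem (inv_mem huH) hh) huH
    have h2 := hstabz (-(m:ℤ)) _ h1
    have e1 : t ^ (-(m:ℤ)) * (u⁻¹ * h * u) * (t ^ (-(m:ℤ)))⁻¹ = q⁻¹ * h * q := by
      rw [hu, ← zpow_natCast t m]; group
    rwa [e1] at h2
  -- the elements w_s
  have hW : ∀ s : ℕ, (σm (1 + (s:ℤ) * k) : BraidGroup n) * (σm (1 + ((s:ℤ)+1) * k))⁻¹ ∈ H := by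
    intro s
    induction s with
    | zero =>
      have e0 : (1 + ((0:ℕ):ℤ) * k : ℤ) = 1 := by push_cast; ring
      have e1 : (1 + (((0:ℕ):ℤ)+1) * k : ℤ) = ((1 + k : ℕ) : ℤ) := by push_cast; ring
      rw [e0, e1, σm_one, σm_nat (by omega) (by omega), ← ht]
      exact hvH
    | succ s ih =>
      have h2 := hqstab _ ih
      have e1 : q * (σm (1 + (s:ℤ)*k) * (σm (1 + ((s:ℤ)+1)*k))⁻¹) * q⁻¹
          = (q * σm (1 + (s:ℤ)*k) * q⁻¹) * (q * σm (1 + ((s:ℤ)+1)*k) * q⁻¹)⁻¹ := by group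
      rw [e1, hconj, hconj] at h2
      have e2 : (1 + (s:ℤ)*k + k : ℤ) = 1 + (((s+1:ℕ):ℤ)) * k := by push_cast; ring
      have e3 : (1 + ((s:ℤ)+1)*k + k : ℤ) = 1 + ((((s+1:ℕ)):ℤ)+1) * k := by push_cast; ring
      rw [e2, e3] at h2
      exact h2
  -- telescoping
  have hTele : ∀ s : ℕ, (σm 1 : BraidGroup n) * (σm (1 + (s:ℤ) * k))⁻¹ ∈ H := by
    intro s
    induction s with
    | zero =>
      have e0 : (1 + ((0:ℕ):ℤ) * k : ℤ) = 1 := by push_cast; ring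
      rw [e0]
      simpa using H.one_mem
    | succ s ih =>
      have h2 := mul_mem ih (hW s)
      have e1 : (σm 1 : BraidGroup n) * (σm (1 + (s:ℤ)*k))⁻¹ *
          (σm (1 + (s:ℤ)*k) * (σm (1 + ((s:ℤ)+1)*k))⁻¹)
          = σm 1 * (σm (1 + ((s:ℤ)+1)*k))⁻¹ := by group
      rw [e1] at h2
      have e2 : (1 + ((s:ℤ)+1)*k : ℤ) = 1 + ((s+1:ℕ):ℤ)*k := by push_cast; ring
      rwa [e2] at h2
  -- all σ i t⁻¹ belong to H
  have hσmem : ∀ i : ℕ, 1 ≤ i → i ≤ n - 1 → (σ i : BraidGroup n) * t⁻¹ ∈ H := by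
    intro i hi1 hi2
    set kk : (ZMod n)ˣ := ZMod.unitOfCoprime k hg with hkk
    set x : ZMod n := ((i : ZMod n) - 1) * ((kk⁻¹ : (ZMod n)ˣ) : ZMod n) with hx
    set s : ℕ := x.val with hs
    have hsx : ((s : ℕ) : ZMod n) = x := ZMod.natCast_rightInverse x
    have hkcoe : ((k : ZMod n)) = (kk : ZMod n) := (ZMod.coe_unitOfCoprime k hg).symm
    have key : ((1 + s * k : ℕ) : ZMod n) = (i : ZMod n) := by
      push_cast
      rw [hsx, hx, hkcoe, mul_assoc, Units.inv_mul]
      ring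
    have key2 : (((1 + s * k : ℕ) : ℤ) : ZMod n) = (((i : ℕ) : ℤ) : ZMod n) := by
      push_cast at key ⊢
      exact key
    have hmod := (ZMod.intCast_eq_intCast_iff _ _ _).mp key2
    obtain ⟨c, hc⟩ := Int.ModEq.dvd hmod
    have harg : (1 : ℤ) + (s:ℤ) * k = (i:ℤ) + (-c) * n := by push_cast at hc ⊢; linarith
    have h5 := hTele s
    rw [harg, σm_period hn3 (i:ℤ) (-c), σm_nat hi1 hi2, σm_one, ← ht] at h5
    have h6 := inv_mem h5
    rwa [mul_inv_rev, inv_inv] at h6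
  -- direction 1 : H ≤ commutator
  have dir1 : H ≤ commutator (BraidGroup n) := by
    rw [hH]
    refine (Subgroup.closure_le _).mpr ?_
    rintro z hz
    simp only [Set.mem_insert_iff, Set.mem_singleton_iff] at hz
    rcases hz with rfl | rfl
    · have hab : Abelianization.of u = 1 := by
        rw [hu, hq, ht, hm]
        rw [map_mul, map_inv, map_pow, map_pow, ab_α (by omega), ← pow_mul]
        rw [mul_inv_eq_one]
        congr 1
        ring
      exact (QuotientGroup.eq_one_iff u).mp hab
    · have hv2 : v = ⁅t, q⁆ := by
        rw [hv, ← hs1, commutatorElement_def]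
        group
      rw [hv2]
      exact Subgroup.commutator_mem_commutator (Subgroup.mem_top t) (Subgroup.mem_top q)
  -- direction 2 : commutator ≤ H
  have dir2 : commutator (BraidGroup n) ≤ H := by
    refine le_trans (Abelianization.commutator_subset_ker (expSum n)) ?_
    refine ker_le_of_conj (expSum n) t ?_ H hstab1 hstab2
      (Set.range (PresentedGroup.of : Fin (n-1) → BraidGroup n))
      (PresentedGroup.closure_range_of (braidRels n)) ?_
    · rw [ht]; exact expSum_σ (le_refl 1) (by omega)
    · rintro g ⟨j, rfl⟩
      have hofj : (PresentedGroup.of j : BraidGroup n) = σ ((j:ℕ) + 1) := by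
        rw [σ_def (by omega) (by omega : (j:ℕ) + 1 < n)]
        congr 1
      rw [hofj, expSum_σ (by omega) (by omega : (j:ℕ) + 1 < n), toAdd_ofAdd, zpow_one]
      exact hσmem ((j:ℕ) + 1) (by omega) (by omega)
  exact le_antisymm dir1 dir2
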